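/- Let α, β be odd integers, ω ∈ ℤ, η ≥ 0 an integer, and let D̃ = {(0,0)ᵗ, (α,0)ᵗ, (ω, 2^η β)ᵗ, (−α−ω, −2^η β)ᵗ} ⊂ ℤ². Then for all distinct i, j ∈ {0,1,2,3}, the difference set Θᵢ − Θⱼ is contained in Z(m_D̃). -/

import Mathlib

open MeasureTheory Matrix Complex
open scoped ENNReal

noncomputable section

/-- The exponential function `x ↦ e^{2πi⟨l,x⟩}` on `Fin n → ℝ`. -/
def expChar {n : ℕ} (l x : Fin n → ℝ) : ℂ :=
  Complex.exp (2 * Real.pi * Complex.I * Complex.ofReal (∑ i, l i * x i))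

/-- `Λ` is an orthogonal set of `μ`: the exponentials `e^{2πi⟨λ,·⟩}`, `λ ∈ Λ`,
form an orthonormal family in `L²(μ)`. -/
def IsOrthogonalSet {n : ℕ} (μ : Measure (Fin n → ℝ)) (Λ : Set (Fin n → ℝ)) : Prop :=
  ∃ b : Λ → Lp ℂ 2 μ,
    (∀ l : Λ, (b l : (Fin n → ℝ) → ℂ) =ᵐ[μ] expChar (l : Fin n → ℝ)) ∧
    Orthonormal ℂ b

/-- `Λ` is a spectrum of `μ`: the exponentials `e^{2πi⟨λ,·⟩}`, `λ ∈ Λ`,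
form an orthonormal basis (orthonormal and total) of `L²(μ)`. -/
def IsSpectrum {n : ℕ} (μ : Measure (Fin n → ℝ)) (Λ : Set (Fin n → ℝ)) : Prop :=
  ∃ b : Λ → Lp ℂ 2 μ,
    (∀ l : Λ, (b l : (Fin n → ℝ) → ℂ) =ᵐ[μ] expChar (l : Fin n → ℝ)) ∧
    Orthonormal ℂ b ∧
    (Submodule.span ℂ (Set.range b)).topologicalClosure = ⊤

/-- `μ` is a spectral measure : some countable `Λ` is a spectrum of `μ`. -/
def IsSpectralMeasure {n : ℕ} (μ : Measure (Fin n → ℝ)) : Prop :=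
  ∃ Λ : Set (Fin n → ℝ), Λ.Countable ∧ IsSpectrum μ Λ

/-- A real matrix is expansive if all of its (complex) eigenvalues have modulus `> 1`. -/
def Expansive {n : ℕ} (M : Matrix (Fin n) (Fin n) ℝ) : Prop :=
  ∀ z : ℂ, (M.map (Complex.ofReal)).charpoly.IsRoot z → 1 < ‖z‖

/-- `μ` is the self-affine measure associated with `(M, D)`: a compactly supported
Borel probability measure satisfying `μ = (1/#D) ∑_{d ∈ D} μ ∘ φ_d⁻¹`,
where `φ_d x = M⁻¹(x + d)`. -/
def IsSelfAffineMeasure {n : ℕ} (M : Matrix (Fin n) (Fin n) ℝ) (D : Finset (Fin n → ℝ))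
    (μ : Measure (Fin n → ℝ)) : Prop :=
  IsProbabilityMeasure μ ∧
  (∃ K : Set (Fin n → ℝ), IsCompact K ∧ μ Kᶜ = 0) ∧
  μ = (D.card : ℝ≥0∞)⁻¹ • ∑ d ∈ D, μ.map (fun x => M⁻¹.mulVec (x + d))

/-- Coordinatewise cast of an integer vector to a real vector. -/
def intCast {n : ℕ} (v : Fin n → ℤ) : Fin n → ℝ := fun i => (v i : ℝ)

/-- The matrix `H = N^{-1/2} (e^{2πi⟨M⁻¹d, s⟩})_{d ∈ D, s ∈ S}`. -/
def hadamardH {n : ℕ} (M : Matrix (Fin n) (Fin n) ℤ) (D S : Finset (Fin n → ℤ)) :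
    Matrix D S ℂ := fun d s =>
  (Real.sqrt (D.card) : ℂ)⁻¹ *
    Complex.exp (2 * Real.pi * Complex.I *
      Complex.ofReal (∑ i, ((M.map (Int.cast : ℤ → ℝ))⁻¹.mulVec (intCast d.1)) i * ((s.1 i : ℝ))))

/-- `(M, D, S)` is a Hadamard triple: `#D = #S` and
`H = N^{-1/2}(e^{2πi⟨M⁻¹d,s⟩})` is unitary. -/
def IsHadamardTriple {n : ℕ} (M : Matrix (Fin n) (Fin n) ℤ) (D S : Finset (Fin n → ℤ)) :
    Prop :=
  D.card = S.card ∧ (hadamardH M D S)ᴴ * hadamardH M D S = 1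

/-- `(M, D)` is admissible: there is `S ⊂ ℤⁿ` such that `(M, D, S)` is a Hadamard triple. -/
def IsAdmissible {n : ℕ} (M : Matrix (Fin n) (Fin n) ℤ) (D : Finset (Fin n → ℤ)) : Prop :=
  ∃ S : Finset (Fin n → ℤ), IsHadamardTriple M D S

/-- The mask polynomial `m_D(x) = (1/#D) ∑_{d∈D} e^{2πi⟨d,x⟩}` of a finite set `D`. -/
def maskPoly {n : ℕ} (D : Finset (Fin n → ℝ)) (x : Fin n → ℝ) : ℂ :=
  (D.card : ℂ)⁻¹ * ∑ d ∈ D, Complex.exp (2 * Real.pi * Complex.I * Complex.ofReal (∑ i, d i * x i))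

/-- The Fourier transform `μ̂(ξ) = ∫ e^{2πi⟨x,ξ⟩} dμ(x)`. -/
def fourierMeasure {n : ℕ} (μ : Measure (Fin n → ℝ)) (ξ : Fin n → ℝ) : ℂ :=
  ∫ x, expChar ξ x ∂μ

/-- The sets `Θ₀, Θ₁, Θ₂, Θ₃` associated with odd integers `α, β`, `ω ∈ ℤ` and `η ≥ 0`:
`Θᵢ = {(2^η(2k+δᵢ)β, (2k'+εᵢ)α − (2k+δᵢ)ω)ᵗ/(2^{η+1}αβ) : k, k' ∈ ℤ}` where
`δᵢ = i % 2` and `εᵢ = i / 2`. -/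
def thetaSet (α β ω : ℤ) (η : ℕ) (i : Fin 4) : Set (Fin 2 → ℝ) :=
  { v | ∃ k k' : ℤ, v = ((2 : ℝ) ^ (η + 1) * (α : ℝ) * (β : ℝ))⁻¹ •
      intCast ![2 ^ η * (2 * k + ((i.val % 2 : ℕ) : ℤ)) * β,
        (2 * k' + ((i.val / 2 : ℕ) : ℤ)) * α - (2 * k + ((i.val % 2 : ℕ) : ℤ)) * ω] }
lemma exp_half (m : ℤ) : Complex.exp (2 * (Real.pi:ℂ) * Complex.I * Complex.ofReal ((m:ℝ)/2)) = (-1:ℂ)^m := by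
  have h : (2 * (Real.pi:ℂ) * Complex.I * Complex.ofReal ((m:ℝ)/2)) = m * (Real.pi * Complex.I) := by
    push_cast; ring
  rw [h, Complex.exp_int_mul, Complex.exp_pi_mul_I]

lemma four_sum (p q : ℤ) (h : Odd p ∨ Odd q) :
    (1:ℂ) + (-1)^p + (-1)^q + (-1)^(-(p+q)) = 0 := by
  rcases Int.even_or_odd p with hp | hp <;> rcases Int.even_or_odd q with hq | hq
  · exfalso; rcases h with h | h
    · exact (Int.not_odd_iff_even.mpr hp) h
    · exact (Int.not_odd_iff_even.mpr hq) h
  · have : Odd (-(p+q)) := by rw [Int.odd_iff] at *; rw [Int.even_iff] at hp; omega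
    rw [hp.neg_one_zpow, hq.neg_one_zpow, this.neg_one_zpow]; ring
  · have : Odd (-(p+q)) := by rw [Int.odd_iff] at *; rw [Int.even_iff] at hq; omega
    rw [hp.neg_one_zpow, hq.neg_one_zpow, this.neg_one_zpow]; ring
  · have : Even (-(p+q)) := by rw [Int.odd_iff] at *; rw [Int.even_iff]; omega
    rw [hp.neg_one_zpow, hq.neg_one_zpow, this.neg_one_zpow]; ring

lemma intCast_inj {n : ℕ} : Function.Injective (intCast (n := n)) := by
  intro v w h
  funext i
  have := congrFun h i
  simpa [intCast] using this

lemma key (α β ω : ℤ) (hα : Odd α) (hβ : Odd β) (η : ℕ)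
    (δ₁ ε₁ δ₂ ε₂ k k' l l' : ℤ)
    (hodd : Odd ((2*k+δ₁) - (2*l+δ₂)) ∨ Odd ((2*k'+ε₁) - (2*l'+ε₂))) :
    maskPoly ((({![0,0], ![α,0], ![ω, 2^η*β], ![-α-ω, -(2^η*β)]} : Finset (Fin 2 → ℤ))).image intCast)
      (((2 : ℝ) ^ (η + 1) * (α : ℝ) * (β : ℝ))⁻¹ •
          intCast ![2 ^ η * (2 * k + δ₁) * β, (2 * k' + ε₁) * α - (2 * k + δ₁) * ω]
       - ((2 : ℝ) ^ (η + 1) * (α : ℝ) * (β : ℝ))⁻¹ •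
          intCast ![2 ^ η * (2 * l + δ₂) * β, (2 * l' + ε₂) * α - (2 * l + δ₂) * ω]) = 0 := by
  have hα0 : (α : ℝ) ≠ 0 := Int.cast_ne_zero.mpr (by rcases hα with ⟨m, hm⟩; omega)
  have hβ0 : (β : ℝ) ≠ 0 := Int.cast_ne_zero.mpr (by rcases hβ with ⟨m, hm⟩; omega)
  have h2 : ((2:ℝ) ^ (η+1)) ≠ 0 := by positivity
  set p := (2*k+δ₁) - (2*l+δ₂) with hp
  set q := (2*k'+ε₁) - (2*l'+ε₂) with hq
  set c : ℝ := (2 : ℝ) ^ (η + 1) * (α : ℝ) * (β : ℝ) with hc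
  set x : Fin 2 → ℝ := c⁻¹ • intCast ![2 ^ η * (2 * k + δ₁) * β, (2 * k' + ε₁) * α - (2 * k + δ₁) * ω]
       - c⁻¹ • intCast ![2 ^ η * (2 * l + δ₂) * β, (2 * l' + ε₂) * α - (2 * l + δ₂) * ω] with hx
  have hx0 : x 0 = c⁻¹ * ((2 ^ η * (2 * k + δ₁) * β : ℤ) : ℝ) - c⁻¹ * ((2 ^ η * (2 * l + δ₂) * β : ℤ) : ℝ) := by
    simp [hx, intCast]
  have hx1 : x 1 = c⁻¹ * (((2 * k' + ε₁) * α - (2 * k + δ₁) * ω : ℤ) : ℝ)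
      - c⁻¹ * (((2 * l' + ε₂) * α - (2 * l + δ₂) * ω : ℤ) : ℝ) := by
    simp [hx, intCast]
  -- distinctness
  have hβz : (β:ℤ) ≠ 0 := by rcases hβ with ⟨m, hm⟩; omega
  have hαz : (α:ℤ) ≠ 0 := by rcases hα with ⟨m, hm⟩; omega
  have d01 : (![0,0] : Fin 2 → ℤ) ≠ ![α,0] := by
    intro h; have := congrFun h 0; simp at this; exact hαz this.symm
  have d02 : (![0,0] : Fin 2 → ℤ) ≠ ![ω, 2^η*β] := by
    intro h; have := congrFun h 1; simp at this; exact hβz this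
  have d03 : (![0,0] : Fin 2 → ℤ) ≠ ![-α-ω, -(2^η*β)] := by
    intro h; have := congrFun h 1; simp at this; exact hβz this
  have d12 : (![α,0] : Fin 2 → ℤ) ≠ ![ω, 2^η*β] := by
    intro h; have := congrFun h 1; simp at this; exact hβz this
  have d13 : (![α,0] : Fin 2 → ℤ) ≠ ![-α-ω, -(2^η*β)] := by
    intro h; have := congrFun h 1; simp at this; exact hβz this
  have d23 : (![ω, 2^η*β] : Fin 2 → ℤ) ≠ ![-α-ω, -(2^η*β)] := by
    intro h; have h1 := congrFun h 1
    simp only [Matrix.cons_val_one, Matrix.head_cons, Matrix.cons_val_zero] at h1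
    have h2z : (2:ℤ)^η * β = 0 := by linarith
    exact mul_ne_zero (pow_ne_zero η two_ne_zero) hβz h2z
  unfold maskPoly
  apply mul_eq_zero_of_right
  rw [Finset.sum_image (fun u _ v _ h => intCast_inj h)]
  rw [show ({![0,0], ![α,0], ![ω, 2^η*β], ![-α-ω, -(2^η*β)]} : Finset (Fin 2 → ℤ))
      = insert ![0,0] (insert ![α,0] (insert ![ω, 2^η*β] {![-α-ω, -(2^η*β)]})) from rfl]
  rw [Finset.sum_insert (by simp [d01, d02, d03]),
      Finset.sum_insert (by simp [d12, d13]),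
      Finset.sum_insert (by simp [d23]),
      Finset.sum_singleton]
  have e0 : (∑ i, intCast (![0,0] : Fin 2 → ℤ) i * x i) = ((0:ℤ):ℝ)/2 := by
    simp [Fin.sum_univ_two, intCast]
  have e1 : (∑ i, intCast (![α,0] : Fin 2 → ℤ) i * x i) = ((p:ℤ):ℝ)/2 := by
    simp only [Fin.sum_univ_two, intCast, Matrix.cons_val_zero, Matrix.cons_val_one, Matrix.head_cons]
    rw [hx0, hx1, hp, hc]
    push_cast
    field_simp
    ring
  have e2 : (∑ i, intCast (![ω, 2^η*β] : Fin 2 → ℤ) i * x i) = ((q:ℤ):ℝ)/2 := by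
    simp only [Fin.sum_univ_two, intCast, Matrix.cons_val_zero, Matrix.cons_val_one, Matrix.head_cons]
    rw [hx0, hx1, hq, hc]
    push_cast
    field_simp
    ring
  have e3 : (∑ i, intCast (![-α-ω, -(2^η*β)] : Fin 2 → ℤ) i * x i) = ((-(p+q):ℤ):ℝ)/2 := by
    simp only [Fin.sum_univ_two, intCast, Matrix.cons_val_zero, Matrix.cons_val_one, Matrix.head_cons]
    rw [hx0, hx1, hp, hq, hc]
    push_cast
    field_simp
    ring
  rw [e0, e1, e2, e3, exp_half, exp_half, exp_half, exp_half]
  linear_combination four_sum p q hodd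

theorem theta_cross_difference_in_zero_set
    (α β ω : ℤ) (hα : Odd α) (hβ : Odd β) (η : ℕ)
    (Dt : Finset (Fin 2 → ℤ))
    (hDt : Dt = {![0, 0], ![α, 0], ![ω, 2 ^ η * β], ![-α - ω, -(2 ^ η * β)]}) :
    ∀ i j : Fin 4, i ≠ j → ∀ a ∈ thetaSet α β ω η i, ∀ b ∈ thetaSet α β ω η j,
      maskPoly (Dt.image intCast) (a - b) = 0 := by
  intro i j hij a ha b hb
  simp only [thetaSet, Set.mem_setOf_eq] at ha hb
  obtain ⟨k, k', rfl⟩ := ha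
  obtain ⟨l, l', rfl⟩ := hb
  subst hDt
  apply key α β ω hα hβ η
  fin_cases i <;> fin_cases j <;> simp_all [Int.odd_iff] <;> omega


end
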